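/- Parameter-shift relation for the deformed binomial weights: for 0 ≤ j ≤ m and y ∈ ℕ, φ_{q, q^y μ, q^y ν}(j|m) = φ_{q,μ,ν}(j|m) · q^{yj} · (ν;q)_y (μ q^{m-j};q)_y / [(μ;q)_y (ν q^m;q)_y]. -/

import Mathlib

noncomputable def qpR (a q : ℝ) (n : ℕ) : ℝ := ∏ i ∈ Finset.range n, (1 - a * q ^ i)

noncomputable def phi (q μ ν : ℝ) (j m : ℕ) : ℝ :=
  μ ^ j * qpR (ν / μ) q j * qpR μ q (m - j) * qpR q q m
    / (qpR ν q m * qpR q q j * qpR q q (m - j))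

lemma qpR_add (a q : ℝ) (n k : ℕ) :
    qpR a q (n + k) = qpR a q n * qpR (a * q ^ n) q k := by
  unfold qpR
  rw [Finset.prod_range_add]
  congr 1
  refine Finset.prod_congr rfl fun i _ => ?_
  rw [pow_add]; ring

theorem stmt10 (q μ ν : ℝ) (hq0 : q ≠ 0) (hμ0 : μ ≠ 0) (j m y : ℕ) (hjm : j ≤ m)
    (h1 : qpR (q ^ y * ν) q m ≠ 0) (h2 : qpR ν q m ≠ 0)
    (h3 : qpR q q j ≠ 0) (h4 : qpR q q (m - j) ≠ 0)
    (h5 : qpR μ q y ≠ 0) (h6 : qpR (ν * q ^ m) q y ≠ 0) :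
    phi q (q ^ y * μ) (q ^ y * ν) j m
      = phi q μ ν j m * q ^ (y * j)
          * (qpR ν q y * qpR (μ * q ^ (m - j)) q y
              / (qpR μ q y * qpR (ν * q ^ m) q y)) := by
  have eq1 : qpR μ q y * qpR (μ * q ^ y) q (m - j)
      = qpR μ q (m - j) * qpR (μ * q ^ (m - j)) q y := by
    rw [← qpR_add, ← qpR_add, add_comm]
  have eq2 : qpR ν q y * qpR (ν * q ^ y) q m
      = qpR ν q m * qpR (ν * q ^ m) q y := by
    rw [← qpR_add, ← qpR_add, add_comm]
  have hdiv : (q ^ y * ν) / (q ^ y * μ) = ν / μ := by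
    rw [mul_div_mul_left _ _ (pow_ne_zero y hq0)]
  have hcm : q ^ y * μ = μ * q ^ y := mul_comm _ _
  have hcn : q ^ y * ν = ν * q ^ y := mul_comm _ _
  have hνy : qpR ν q y ≠ 0 := by
    intro h
    apply h2
    have := eq2
    rw [h, zero_mul] at this
    rcases mul_eq_zero.mp this.symm with h' | h'
    · exact h'
    · exact absurd h' h6
  have e1 : qpR (μ * q ^ y) q (m - j)
      = qpR μ q (m - j) * qpR (μ * q ^ (m - j)) q y / qpR μ q y := by
    field_simp
    linarith [eq1]
  have e2 : qpR (ν * q ^ y) q m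
      = qpR ν q m * qpR (ν * q ^ m) q y / qpR ν q y := by
    field_simp
    linarith [eq2]
  unfold phi
  rw [hdiv, hcm, hcn, e1, e2, mul_pow, ← pow_mul]
  have h2' : qpR ν q m * qpR (ν * q ^ m) q y / qpR ν q y ≠ 0 := by
    rw [← e2, ← hcn]; exact h1
  field_simp
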